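/- Let X be a compactum (a compact perfect metric space with more than one point), let n ≥ 2 be an integer, and let f : X → X be a continuous map. Then F_n(f) is Touhey if and only if SF_n(f) is Touhey; moreover, if F_n(f) is Touhey, then f is Touhey. -/

import Mathlib

open Metric Set TopologicalSpace

variable (X : Type*) [MetricSpace X] (n : ℕ)

/-- The `n`-fold symmetric product `F_n(X)`: nonempty subsets of `X` with at most `n`
points, as a subspace of the nonempty compact subsets of `X` with the Hausdorff metric. -/
abbrev Fn := {A : NonemptyCompacts X // (A : Set X).Finite ∧ (A : Set X).ncard ≤ n}

/-- The induced map `F_n(f)` on the `n`-fold symmetric product, `A ↦ f(A)`. -/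
noncomputable def FnMap (f : X → X) : Fn X n → Fn X n := fun A =>
  ⟨⟨⟨f '' (A.1 : Set X), (A.2.1.image f).isCompact⟩, A.1.nonempty.image f⟩,
    A.2.1.image f, le_trans (Set.ncard_image_le A.2.1) A.2.2⟩

/-- `F_1(X) ⊆ F_n(X)`: the set of singletons. -/
def F1 : Set (Fn X n) := {A | ∃ x : X, (A.1 : Set X) = {x}}

/-- The setoid collapsing `F_1(X)` to a point. -/
def SFnSetoid : Setoid (Fn X n) where
  r A B := A = B ∨ (A ∈ F1 X n ∧ B ∈ F1 X n)
  iseqv := by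
    refine ⟨fun _ => Or.inl rfl, fun h => h.imp Eq.symm And.symm, fun h₁ h₂ => ?_⟩
    rcases h₁ with rfl | h₁
    · exact h₂
    · rcases h₂ with rfl | h₂
      · exact Or.inr h₁
      · exact Or.inr ⟨h₁.1, h₂.2⟩

/-- The `n`-fold symmetric product suspension `SF_n(X) = F_n(X)/F_1(X)`,
with the quotient topology. -/
abbrev SFn := Quotient (SFnSetoid X n)

/-- The quotient map `q : F_n(X) → SF_n(X)`. -/
def SFnQ : Fn X n → SFn X n := Quotient.mk (SFnSetoid X n)

/-- The induced map `SF_n(f)` on the suspension, with `SF_n(f) ∘ q = q ∘ F_n(f)`. -/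
noncomputable def SFnMap (f : X → X) : SFn X n → SFn X n :=
  Quotient.lift (fun A => SFnQ X n (FnMap X n f A))
    (fun A B h => Quotient.sound (by
      rcases h with rfl | ⟨⟨x, hx⟩, ⟨y, hy⟩⟩
      · exact Or.inl rfl
      · exact Or.inr ⟨⟨f x, by simp [FnMap, hx]⟩, ⟨f y, by simp [FnMap, hy]⟩⟩))

/-- The metric `ρ` on `SF_n(X)`:
`ρ(χ₁,χ₂) = H(F_1(X) ∪ q⁻¹(χ₁), F_1(X) ∪ q⁻¹(χ₂))` where `H` is the Hausdorff
distance between subsets of `F_n(X)`. -/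
noncomputable def SFnDist : SFn X n → SFn X n → ℝ := fun a b =>
  Metric.hausdorffDist (F1 X n ∪ SFnQ X n ⁻¹' {a}) (F1 X n ∪ SFnQ X n ⁻¹' {b})

/-- `z` is a periodic point of `g`. -/
def PeriodicPt' {Z : Type*} (g : Z → Z) (z : Z) : Prop :=
  ∃ k : ℕ, 0 < k ∧ g^[k] z = z

/-- `g` is Touhey: every pair of nonempty open sets `U, V` admits a periodic point
`z ∈ U` and `k ∈ ℤ₊` with `g^k(z) ∈ V`. -/
def Touhey {Z : Type*} [TopologicalSpace Z] (g : Z → Z) : Prop :=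
  ∀ U V : Set Z, IsOpen U → IsOpen V → U.Nonempty → V.Nonempty →
    ∃ z ∈ U, PeriodicPt' g z ∧ ∃ k : ℕ, g^[k] z ∈ V

section Aux

variable {X : Type*} [MetricSpace X] {n : ℕ}

lemma fnMap_coe (f : X → X) (A : Fn X n) :
    ((FnMap X n f A).1 : Set X) = f '' (A.1 : Set X) := rfl

lemma fnMap_iterate (f : X → X) (k : ℕ) (A : Fn X n) :
    (((FnMap X n f)^[k] A).1 : Set X) = f^[k] '' (A.1 : Set X) := by
  induction k with
  | zero => simp
  | succ k ih =>
      rw [Function.iterate_succ_apply', fnMap_coe, ih, Function.iterate_succ',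
        Set.image_comp]

lemma sfnMap_q (f : X → X) (A : Fn X n) :
    SFnMap X n f (SFnQ X n A) = SFnQ X n (FnMap X n f A) := rfl

lemma sfnMap_iterate_q (f : X → X) (k : ℕ) (A : Fn X n) :
    (SFnMap X n f)^[k] (SFnQ X n A) = SFnQ X n ((FnMap X n f)^[k] A) := by
  induction k with
  | zero => rfl
  | succ k ih =>
      rw [Function.iterate_succ_apply', ih, sfnMap_q,
        ← Function.iterate_succ_apply' (FnMap X n f) k A]

lemma continuous_SFnQ : Continuous (SFnQ X n) := continuous_quot_mk

lemma sfnQ_eq {A B : Fn X n} (h : SFnQ X n A = SFnQ X n B) :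
    A = B ∨ (A ∈ F1 X n ∧ B ∈ F1 X n) := Quotient.exact h

lemma edist_fin (A B : Fn X n) :
    EMetric.hausdorffEdist (A.1 : Set X) (B.1 : Set X) ≠ ⊤ :=
  Metric.hausdorffEdist_ne_top_of_nonempty_of_bounded A.1.nonempty B.1.nonempty
    A.1.isCompact.isBounded B.1.isCompact.isBounded

lemma fn_dist_eq (A B : Fn X n) :
    dist A B = Metric.hausdorffDist (A.1 : Set X) (B.1 : Set X) := rfl

lemma isOpen_q_image {W : Set (Fn X n)} (hW : IsOpen W) (hd : ∀ A ∈ W, A ∉ F1 X n) :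
    IsOpen (SFnQ X n '' W) := by
  have hsat : SFnQ X n ⁻¹' (SFnQ X n '' W) = W := by
    ext A
    constructor
    · rintro ⟨B, hB, hq⟩
      rcases sfnQ_eq hq with rfl | ⟨hB1, _⟩
      · exact hB
      · exact absurd hB1 (hd B hB)
    · exact fun hA => ⟨A, hA, rfl⟩
  have h2 : IsOpen (SFnQ X n ⁻¹' (SFnQ X n '' W)) := by rw [hsat]; exact hW
  exact isOpen_coinduced.mpr h2

lemma isClosed_F1 : IsClosed (F1 X n) := by
  rw [← isOpen_compl_iff, Metric.isOpen_iff]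
  intro A hA
  obtain ⟨a, ha⟩ := A.1.nonempty
  have hab : ∃ b ∈ (A.1 : Set X), b ≠ a := by
    by_contra h
    push_neg at h
    exact hA ⟨a, Set.eq_singleton_iff_unique_mem.mpr ⟨ha, h⟩⟩
  obtain ⟨b, hb, hba⟩ := hab
  have hd : 0 < dist a b := dist_pos.2 (Ne.symm hba)
  refine ⟨dist a b / 3, by linarith, fun B hB => ?_⟩
  rw [Metric.mem_ball, fn_dist_eq] at hB
  obtain ⟨a', ha', haa'⟩ := Metric.exists_dist_lt_of_hausdorffDist_lt' ha hB (edist_fin B A)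
  obtain ⟨b', hb', hbb'⟩ := Metric.exists_dist_lt_of_hausdorffDist_lt' hb hB (edist_fin B A)
  rintro ⟨z, hz⟩
  rw [hz, Set.mem_singleton_iff] at ha' hb'
  subst ha'; subst hb'
  have h1 := dist_triangle a b' b
  rw [dist_comm a b'] at h1
  linarith

lemma exists_notMem_F1 (hX : Perfect (Set.univ : Set X)) (hn : 2 ≤ n)
    {U : Set (Fn X n)} (hU : IsOpen U) (hne : U.Nonempty) :
    ∃ A ∈ U, A ∉ F1 X n := by
  obtain ⟨A, hA⟩ := hne
  by_cases h : A ∈ F1 X n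
  · obtain ⟨x, hx⟩ := h
    obtain ⟨ε, hε, hball⟩ := Metric.isOpen_iff.1 hU A hA
    obtain ⟨y, ⟨hy_ball, _⟩, hyx⟩ := accPt_iff_nhds.1 (hX.acc x trivial)
      (Metric.ball x ε) (Metric.ball_mem_nhds x hε)
    have hxy : x ≠ y := Ne.symm hyx
    refine ⟨⟨⟨⟨{x, y}, (Set.finite_singleton y |>.insert x).isCompact⟩,
      ⟨x, Set.mem_insert x {y}⟩⟩, Set.finite_singleton y |>.insert x,
      le_trans ((Set.ncard_insert_le x {y}).trans (by simp)) hn⟩, ?_, ?_⟩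
    · apply hball
      rw [Metric.mem_ball, fn_dist_eq, hx]
      calc Metric.hausdorffDist ({x, y} : Set X) ({x} : Set X) ≤ dist x y := by
            apply Metric.hausdorffDist_le_of_mem_dist dist_nonneg
            · intro z hz
              rcases Set.mem_insert_iff.1 hz with h1 | h1
              · exact ⟨x, rfl, by rw [h1]; simp [dist_nonneg]⟩
              · rw [Set.mem_singleton_iff] at h1
                exact ⟨x, rfl, le_of_eq (by rw [h1, dist_comm])⟩
            · intro z hz
              rw [Set.mem_singleton_iff] at hz
              exact ⟨x, Set.mem_insert x {y}, by rw [hz]; simp [dist_nonneg]⟩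
        _ < ε := by rw [dist_comm]; exact hy_ball
    · rintro ⟨z, hz⟩
      have hx' : x ∈ ({z} : Set X) := hz ▸ Set.mem_insert x {y}
      have hy' : y ∈ ({z} : Set X) := hz ▸ Set.mem_insert_of_mem x rfl
      rw [Set.mem_singleton_iff] at hx' hy'
      exact hxy (hx'.trans hy'.symm)
  · exact ⟨A, hA, h⟩

lemma isOpen_vietoris {U : Set X} [CompactSpace X] (hU : IsOpen U) :
    IsOpen {A : Fn X n | (A.1 : Set X) ⊆ U} := by
  rw [Metric.isOpen_iff]
  intro A hA
  obtain ⟨δ, hδ, hsub⟩ := A.1.isCompact.exists_thickening_subset_open hU hA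
  refine ⟨δ, hδ, fun B hB => ?_⟩
  rw [Metric.mem_ball, fn_dist_eq] at hB
  intro b hb
  obtain ⟨a, ha, hab⟩ := Metric.exists_dist_lt_of_hausdorffDist_lt hb hB (edist_fin B A)
  exact hsub (Metric.mem_thickening_iff.2 ⟨a, ha, hab⟩)

lemma periodic_of_finite {g : X → X} {A : Set X} (hfin : A.Finite)
    (hA : g '' A = A) {x : X} (hx : x ∈ A) : ∃ j : ℕ, 0 < j ∧ g^[j] x = x := by
  have hmaps : Set.MapsTo g A A := fun a ha => hA ▸ Set.mem_image_of_mem g ha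
  have hsurj : Set.SurjOn g A A := by rw [Set.SurjOn, hA]
  have hbij := (hfin.surjOn_iff_bijOn_of_mapsTo hmaps).1 hsurj
  have hiter : ∀ k, g^[k] x ∈ A := fun k => hmaps.iterate k hx
  have hfinA : Finite A := hfin.to_subtype
  obtain ⟨i, j, hij, hX⟩ := Finite.exists_ne_map_eq_of_infinite
    (fun k : ℕ => (⟨g^[k] x, hiter k⟩ : A))
  rcases hij.lt_or_gt with hlt | hlt
  · refine ⟨j - i, by omega, hbij.injOn.iterate hmaps i (hiter _) hx ?_⟩
    rw [← Function.iterate_add_apply, show i + (j - i) = j by omega]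
    exact (congrArg Subtype.val hX).symm
  · refine ⟨i - j, by omega, hbij.injOn.iterate hmaps j (hiter _) hx ?_⟩
    rw [← Function.iterate_add_apply, show j + (i - j) = i by omega]
    exact congrArg Subtype.val hX

end Aux
theorem stmt16 (X : Type*) [MetricSpace X] [CompactSpace X] [Nontrivial X]
    (hX : Perfect (Set.univ : Set X))
    (n : ℕ) (hn : 2 ≤ n) (f : X → X) (hf : Continuous f) :
    (Touhey (FnMap X n f) ↔ Touhey (SFnMap X n f)) ∧
    (Touhey (FnMap X n f) → Touhey f) := by
  constructor
  · constructor
    · -- Fn Touhey → SFn Touhey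
      intro hT U V hUo hVo hUne hVne
      have hqU : IsOpen (SFnQ X n ⁻¹' U) := hUo.preimage continuous_SFnQ
      have hqV : IsOpen (SFnQ X n ⁻¹' V) := hVo.preimage continuous_SFnQ
      obtain ⟨u, hu⟩ := hUne
      obtain ⟨A₀, rfl⟩ := Quotient.exists_rep u
      obtain ⟨v, hv⟩ := hVne
      obtain ⟨B₀, rfl⟩ := Quotient.exists_rep v
      obtain ⟨A, hAU, ⟨m, hm, hper⟩, k, hk⟩ := hT (SFnQ X n ⁻¹' U) (SFnQ X n ⁻¹' V)
        hqU hqV ⟨A₀, hu⟩ ⟨B₀, hv⟩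
      refine ⟨SFnQ X n A, hAU, ⟨m, hm, ?_⟩, k, ?_⟩
      · rw [sfnMap_iterate_q, hper]
      · rw [sfnMap_iterate_q]; exact hk
    · -- SFn Touhey → Fn Touhey
      intro hT U V hUo hVo hUne hVne
      obtain ⟨A₀, hA₀U, hA₀⟩ := exists_notMem_F1 hX hn hUo hUne
      obtain ⟨B₀, hB₀V, hB₀⟩ := exists_notMem_F1 hX hn hVo hVne
      set U' := U ∩ (F1 X n)ᶜ with hU'def
      set V' := V ∩ (F1 X n)ᶜ with hV'def
      have hU'o : IsOpen U' := hUo.inter isClosed_F1.isOpen_compl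
      have hV'o : IsOpen V' := hVo.inter isClosed_F1.isOpen_compl
      have hU'd : ∀ A ∈ U', A ∉ F1 X n := fun A hA => hA.2
      have hV'd : ∀ A ∈ V', A ∉ F1 X n := fun A hA => hA.2
      obtain ⟨χ, hχU, ⟨m, hm, hper⟩, k, hk⟩ := hT (SFnQ X n '' U') (SFnQ X n '' V')
        (isOpen_q_image hU'o hU'd) (isOpen_q_image hV'o hV'd)
        ⟨_, A₀, ⟨hA₀U, hA₀⟩, rfl⟩ ⟨_, B₀, ⟨hB₀V, hB₀⟩, rfl⟩
      obtain ⟨A, hAU', hAχ⟩ := hχU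
      subst hAχ
      rw [sfnMap_iterate_q] at hper hk
      have hAper : (FnMap X n f)^[m] A = A := by
        rcases sfnQ_eq hper with h | ⟨_, h⟩
        · exact h
        · exact absurd h hAU'.2
      obtain ⟨B, hBV', hBχ⟩ := hk
      have hABk : (FnMap X n f)^[k] A = B := by
        rcases sfnQ_eq hBχ.symm with h | ⟨_, h⟩
        · exact h
        · exact absurd h hBV'.2
      exact ⟨A, hAU'.1, ⟨m, hm, hAper⟩, k, hABk ▸ hBV'.1⟩
  · -- Fn Touhey → f Touhey
    intro hT U V hUo hVo hUne hVne
    obtain ⟨u, hu⟩ := hUne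
    obtain ⟨v, hv⟩ := hVne
    have h1n : 1 ≤ n := le_trans one_le_two hn
    have hsingle : ∀ x : X, ∃ A : Fn X n, (A.1 : Set X) = {x} := fun x =>
      ⟨⟨⟨⟨{x}, isCompact_singleton⟩, ⟨x, rfl⟩⟩, Set.finite_singleton x,
        (Set.ncard_singleton x).le.trans h1n⟩, rfl⟩
    obtain ⟨Au, hAu⟩ := hsingle u
    obtain ⟨Av, hAv⟩ := hsingle v
    obtain ⟨A, hAU, ⟨m, hm, hper⟩, k, hk⟩ := hT {A : Fn X n | (A.1 : Set X) ⊆ U}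
      {A : Fn X n | (A.1 : Set X) ⊆ V} (isOpen_vietoris hUo) (isOpen_vietoris hVo)
      ⟨Au, by rw [Set.mem_setOf_eq, hAu]; exact Set.singleton_subset_iff.2 hu⟩
      ⟨Av, by rw [Set.mem_setOf_eq, hAv]; exact Set.singleton_subset_iff.2 hv⟩
    have himg : f^[m] '' (A.1 : Set X) = (A.1 : Set X) := by
      rw [← fnMap_iterate, hper]
    obtain ⟨x, hx⟩ := A.1.nonempty
    obtain ⟨j, hj, hjx⟩ := periodic_of_finite A.2.1 himg hx
    refine ⟨x, hAU hx, ⟨m * j, Nat.mul_pos hm hj, ?_⟩, k, ?_⟩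
    · rw [Function.iterate_mul]; exact hjx
    · have : f^[k] x ∈ (((FnMap X n f)^[k] A).1 : Set X) := by
        rw [fnMap_iterate]; exact Set.mem_image_of_mem _ hx
      exact hk this
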